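/- Let R be an associative ring, let I be a one-sided (left or right) ideal of R, and let Z = Z(I) be the center of the subring I (the set of elements of I commuting with every element of I). Then there exists a two-sided ideal J of R such that J² = 0 and [Z, R] ⊆ J, i.e. zr − rz ∈ J for all z ∈ Z, r ∈ R. -/

import Mathlib

/-- `I` is a right ideal of `R` (as an additive subgroup closed under right multiplication). -/
def IsRightIdealSG {R : Type*} [Ring R] (I : AddSubgroup R) : Prop :=
  ∀ i ∈ I, ∀ r : R, i * r ∈ I

/-- `I` is a left ideal of `R`. -/
def IsLeftIdealSG {R : Type*} [Ring R] (I : AddSubgroup R) : Prop :=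
  ∀ i ∈ I, ∀ r : R, r * i ∈ I

/-- `I` is a two-sided ideal of `R`. -/
def IsIdealSG {R : Type*} [Ring R] (I : AddSubgroup R) : Prop :=
  IsLeftIdealSG I ∧ IsRightIdealSG I

/-- Left-normed iterated commutator: `itComm s n = [[...[s 0, s 1],...], s n]`
(a left-normed commutator of `n + 1` elements). -/
def itComm {R : Type*} [Ring R] (s : ℕ → R) : ℕ → R
  | 0 => s 0
  | n + 1 => itComm s n * s (n + 1) - s (n + 1) * itComm s n

/-- `S` is Lie nilpotent of class ≤ m : every left-normed commutator of `m + 1`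
elements of `S` vanishes. -/
def LieNilpotentClassLe {R : Type*} [Ring R] (S : Set R) (m : ℕ) : Prop :=
  ∀ s : ℕ → R, (∀ n, s n ∈ S) → itComm s m = 0

/-- The Lie derived series of an additive subgroup `S` of a ring:
`D 0 = S`, `D (k+1)` = additive span of `[D k, D k]`. -/
def derSeries {R : Type*} [Ring R] (S : AddSubgroup R) : ℕ → AddSubgroup R
  | 0 => S
  | n + 1 => AddSubgroup.closure
      {x | ∃ a ∈ derSeries S n, ∃ b ∈ derSeries S n, x = a * b - b * a}

/-- `R^(−)_n`: the additive subgroup generated by all left-normed commutators of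
`n` elements of `R`. -/
def lcs (R : Type*) [Ring R] (n : ℕ) : AddSubgroup R :=
  AddSubgroup.closure {x | ∃ s : ℕ → R, x = itComm s (n - 1)}

/-- `R_n = R^(−)_n + R^(−)_n · R`, a two-sided ideal of `R`. -/
def Rn (R : Type*) [Ring R] (n : ℕ) : AddSubgroup R :=
  lcs R n ⊔ AddSubgroup.closure {x | ∃ c ∈ lcs R n, ∃ r : R, x = c * r}

/-- The additive span of `k`-fold products of elements of `S`. -/
def spanPow {R : Type*} [Ring R] (S : Set R) (k : ℕ) : AddSubgroup R :=
  AddSubgroup.closure {x | ∃ l : List R, l.length = k ∧ (∀ a ∈ l, a ∈ S) ∧ x = l.prod}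

/-- `J` is nilpotent: all `k`-fold products of its elements vanish for some `k > 0`. -/
def IsNilpotentSG {R : Type*} [Ring R] (J : AddSubgroup R) : Prop :=
  ∃ k : ℕ, 0 < k ∧ ∀ l : List R, l.length = k → (∀ a ∈ l, a ∈ J) → l.prod = 0

/-- `R` is semiprime: it has no nonzero nilpotent two-sided ideals. -/
def IsSemiprimeRing (R : Type*) [Ring R] : Prop :=
  ∀ J : AddSubgroup R, IsIdealSG J → IsNilpotentSG J → J = ⊥
section aux
variable {R : Type*} [Ring R]

private lemma key_comm (I : AddSubgroup R) (hI : (∀ i ∈ I, ∀ r : R, r * i ∈ I) ∨ (∀ i ∈ I, ∀ r : R, i * r ∈ I))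
    {z z' : R} (hzI : z ∈ I) (hz'I : z' ∈ I)
    (hz : ∀ i ∈ I, z * i = i * z) (hz' : ∀ i ∈ I, z' * i = i * z')
    (x y : R) : (z * x - x * z) * (z' * y - y * z') = 0 := by
  rcases hI with hL | hR
  · have A : z * (x * z') = (x * z') * z := hz _ (hL z' hz'I x)
    have B : z * ((x * y) * z') = ((x * y) * z') * z := hz _ (hL z' hz'I (x * y))
    have C : z * (y * z') = (y * z') * z := hz _ (hL z' hz'I y)
    have D : z * z' = z' * z := hz z' hz'I
    have e : (z * x - x * z) * (z' * y - y * z')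
        = (z * (x * z')) * y - z * ((x * y) * z') - x * ((z * z') * y) + x * (z * (y * z')) := by
      noncomm_ring
    rw [e, A, B, C, D]
    noncomm_ring
  · have A : z' * (z * x) = (z * x) * z' := hz' _ (hR z hzI x)
    have B : z' * (z * (x * y)) = (z * (x * y)) * z' := hz' _ (hR z hzI (x * y))
    have C : z' * (z * y) = (z * y) * z' := hz' _ (hR z hzI y)
    have D : z' * z = z * z' := hz' z hzI
    have e : (z * x - x * z) * (z' * y - y * z')
        = ((z * x) * z') * y - (z * (x * y)) * z' - x * ((z * z') * y) + x * ((z * y) * z') := by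
      noncomm_ring
    rw [e, ← A, ← B, ← C, ← D]
    noncomm_ring

private lemma key_mid (I : AddSubgroup R) (hI : (∀ i ∈ I, ∀ r : R, r * i ∈ I) ∨ (∀ i ∈ I, ∀ r : R, i * r ∈ I))
    {z z' : R} (hzI : z ∈ I) (hz'I : z' ∈ I)
    (hz : ∀ i ∈ I, z * i = i * z) (hz' : ∀ i ∈ I, z' * i = i * z')
    (x w y : R) : (z * x - x * z) * w * (z' * y - y * z') = 0 := by
  have e : (z * x - x * z) * w * (z' * y - y * z')
      = (z * (x * w) - (x * w) * z) * (z' * y - y * z')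
        - x * ((z * w - w * z) * (z' * y - y * z')) := by noncomm_ring
  rw [e, key_comm I hI hzI hz'I hz hz' (x * w) y, key_comm I hI hzI hz'I hz hz' w y]
  simp

end aux

/-- A one-sided ideal `I` of an associative ring `R` admits a two-sided
ideal `J` of `R` with `J² = 0` and `[Z(I), R] ⊆ J`. -/
theorem lemma_center {R : Type*} [Ring R] (I : AddSubgroup R)
    (hI : IsLeftIdealSG I ∨ IsRightIdealSG I) :
    ∃ J : AddSubgroup R, IsIdealSG J ∧ (∀ a ∈ J, ∀ b ∈ J, a * b = 0) ∧
      ∀ z ∈ I, (∀ i ∈ I, z * i = i * z) → ∀ r : R, z * r - r * z ∈ J := by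
  classical
  set T : Set R := {x | ∃ z r s t : R, z ∈ I ∧ (∀ i ∈ I, z * i = i * z) ∧
      x = s * (z * r - r * z) * t} with hT
  refine ⟨AddSubgroup.closure T, ⟨?_, ?_⟩, ?_, ?_⟩
  · -- left ideal
    intro a ha u
    induction ha using AddSubgroup.closure_induction with
    | mem x hx =>
      obtain ⟨z, r, s, t, hzI, hzc, rfl⟩ := hx
      exact AddSubgroup.subset_closure ⟨z, r, u * s, t, hzI, hzc, by noncomm_ring⟩
    | zero => simpa using AddSubgroup.zero_mem _
    | add x y hx hy px py => rw [mul_add]; exact AddSubgroup.add_mem _ px py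
    | neg x hx px => rw [← mul_neg_one, ← mul_assoc, mul_neg_one]; exact AddSubgroup.neg_mem _ px
  · intro a ha u
    induction ha using AddSubgroup.closure_induction with
    | mem x hx =>
      obtain ⟨z, r, s, t, hzI, hzc, rfl⟩ := hx
      exact AddSubgroup.subset_closure ⟨z, r, s, t * u, hzI, hzc, by noncomm_ring⟩
    | zero => simpa using AddSubgroup.zero_mem _
    | add x y hx hy px py => rw [add_mul]; exact AddSubgroup.add_mem _ px py
    | neg x hx px => rw [neg_mul]; exact AddSubgroup.neg_mem _ px
  · -- products vanish
    have base : ∀ a ∈ T, ∀ b ∈ AddSubgroup.closure T, a * b = 0 := by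
      intro a ha b hb
      induction hb using AddSubgroup.closure_induction with
      | mem y hy =>
        obtain ⟨z, r, s, t, hzI, hzc, rfl⟩ := ha
        obtain ⟨z', r', s', t', hz'I, hz'c, rfl⟩ := hy
        have e : s * (z * r - r * z) * t * (s' * (z' * r' - r' * z') * t')
            = s * ((z * r - r * z) * (t * s') * (z' * r' - r' * z')) * t' := by noncomm_ring
        rw [e, key_mid I hI hzI hz'I hzc hz'c r (t * s') r']
        simp
      | zero => simp
      | add x y hx hy px py => rw [mul_add, px, py, add_zero]
      | neg x hx px => rw [mul_neg, px, neg_zero]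
    intro a ha b hb
    induction ha using AddSubgroup.closure_induction with
    | mem x hx => exact base x hx b hb
    | zero => simp
    | add x y hx hy px py => rw [add_mul, px, py, add_zero]
    | neg x hx px => rw [neg_mul, px, neg_zero]
  · intro z hzI hzc r
    exact AddSubgroup.subset_closure ⟨z, r, 1, 1, hzI, hzc, by rw [one_mul, mul_one]⟩
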